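/- Let u¹ = (u¹₁,u¹₂,u¹₃), u² = (u²₁,u²₂,u²₃) and s = (s₁,s₂,s₃) be vectors in ℂ³. Suppose Δ := u¹₁u²₂ − u¹₂u²₁ ≠ 0 and s₂ ≠ 0. Define η₃ := s₁/s₂, η₄ := s₃/s₂, κ₅ := −(u¹₂u²₃ − u¹₃u²₂)/Δ, and κ₆ := (u¹₁u²₃ − u¹₃u²₁)/Δ. Then the determinant of the 3×3 matrix with columns u¹, u², s satisfies det[u¹ u² s] / (Δ·s₂) = η₄ − κ₆ − η₃·κ₅. -/

import Mathlib

open Matrix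

/-- Algebraic identity relating the Evans function determinant `det[u¹ u² s]` to the
Riccati Evans function: with `Δ = u¹₁u²₂ − u¹₂u²₁ ≠ 0`, `s₂ ≠ 0`,
`η₃ = s₁/s₂`, `η₄ = s₃/s₂`, `κ₅ = −(u¹₂u²₃ − u¹₃u²₂)/Δ`, `κ₆ = (u¹₁u²₃ − u¹₃u²₁)/Δ`,
we have `det[u¹ u² s]/(Δ·s₂) = η₄ − κ₆ − η₃κ₅`. -/
theorem evans_riccati_determinant_identity
    (u₁₁ u₁₂ u₁₃ u₂₁ u₂₂ u₂₃ s₁ s₂ s₃ : ℂ)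
    (Δ : ℂ) (hΔdef : Δ = u₁₁ * u₂₂ - u₁₂ * u₂₁) (hΔ : Δ ≠ 0) (hs₂ : s₂ ≠ 0)
    (η₃ η₄ κ₅ κ₆ : ℂ)
    (hη₃ : η₃ = s₁ / s₂) (hη₄ : η₄ = s₃ / s₂)
    (hκ₅ : κ₅ = -(u₁₂ * u₂₃ - u₁₃ * u₂₂) / Δ)
    (hκ₆ : κ₆ = (u₁₁ * u₂₃ - u₁₃ * u₂₁) / Δ) :
    Matrix.det !![u₁₁, u₂₁, s₁; u₁₂, u₂₂, s₂; u₁₃, u₂₃, s₃] / (Δ * s₂) =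
      η₄ - κ₆ - η₃ * κ₅ := by
  subst hΔdef hη₃ hη₄ hκ₅ hκ₆
  rw [Matrix.det_fin_three]
  field_simp
  simp only [Matrix.of_apply, Matrix.cons_val', Matrix.cons_val_zero, Matrix.cons_val_one, Matrix.cons_val_two, Matrix.empty_val', Matrix.cons_val_fin_one, Matrix.head_cons, Matrix.tail_cons, Matrix.vecHead]
  ring
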